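/- For integers a, b, c ≥ 2: ζ(a,b,c) = −ζ(b,c,a) − ζ(c,a,b) + ζ(a+b+c) + ζ(a)ζ(b,c) + ζ(b)ζ(c,a) + ζ(c)ζ(a,b) − ζ(a)ζ(b)ζ(c). -/
import Mathlib


noncomputable def zeta1 (k : ℕ) : ℝ := ∑' n : ℕ+, 1 / (n : ℝ) ^ k

noncomputable def zeta2 (a b : ℕ) : ℝ :=
  ∑' p : {p : ℕ × ℕ // p.2 < p.1 ∧ 0 < p.2},
    1 / ((p.val.1 : ℝ) ^ a * (p.val.2 : ℝ) ^ b)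

noncomputable def zeta3 (a b c : ℕ) : ℝ :=
  ∑' t : {t : ℕ × ℕ × ℕ // t.2.1 < t.1 ∧ t.2.2 < t.2.1 ∧ 0 < t.2.2},
    1 / ((t.val.1 : ℝ) ^ a * (t.val.2.1 : ℝ) ^ b * (t.val.2.2 : ℝ) ^ c)

namespace TPA

open Set

noncomputable def F (a b c : ℕ) : ℕ × ℕ × ℕ → ℝ :=
  fun t => 1 / ((t.1 : ℝ) ^ a * (t.2.1 : ℝ) ^ b * (t.2.2 : ℝ) ^ c)

lemma sb {k : ℕ} (hk : 2 ≤ k) : Summable (fun n : ℕ => 1 / (n : ℝ) ^ k) :=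
  Real.summable_one_div_nat_pow.mpr (by omega)

lemma sb2 {u v : ℕ} (hu : 2 ≤ u) (hv : 2 ≤ v) :
    Summable (fun q : ℕ × ℕ => 1 / ((q.1 : ℝ) ^ u * (q.2 : ℝ) ^ v)) :=
  ((sb hu).mul_of_nonneg (sb hv) (fun n => by positivity) (fun n => by positivity)).congr
    fun q => by ring

lemma sF {a b c : ℕ} (ha : 2 ≤ a) (hb : 2 ≤ b) (hc : 2 ≤ c) : Summable (F a b c) :=
  ((sb ha).mul_of_nonneg (sb2 hb hc) (fun n => by positivity) (fun q => by positivity)).congr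
    fun t => by simp only [F]; ring

lemma nsb {k : ℕ} (hk : 2 ≤ k) : Summable (fun n : ℕ => ‖1 / (n : ℝ) ^ k‖) :=
  (sb hk).congr fun n => (Real.norm_of_nonneg (by positivity)).symm

def σ : (ℕ × ℕ × ℕ) ≃ (ℕ × ℕ × ℕ) :=
  ⟨fun t => (t.2.1, t.2.2, t.1), fun t => (t.2.2, t.1, t.2.1), fun _ => rfl, fun _ => rfl⟩

def τ : (ℕ × ℕ × ℕ) ≃ (ℕ × ℕ × ℕ) := σ.symm

lemma zeta1_eq {k : ℕ} (hk : 2 ≤ k) : zeta1 k = ∑' n : ℕ, 1 / (n : ℝ) ^ k := by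
  refine Function.Injective.tsum_eq (f := fun n : ℕ => 1 / (n : ℝ) ^ k)
    (g := fun n : ℕ+ => (n : ℕ)) (fun x y h => PNat.coe_injective h) ?_
  intro x hx
  rcases Nat.eq_zero_or_pos x with h | h
  · exfalso; apply hx; simp [h, zero_pow (by omega : k ≠ 0)]
  · exact ⟨⟨x, h⟩, rfl⟩

def SA : Set (ℕ × ℕ × ℕ) := {t | t.2.1 < t.1 ∧ t.2.2 < t.2.1 ∧ 0 < t.2.2}
def SB : Set (ℕ × ℕ × ℕ) := {t | t.2.2 < t.2.1 ∧ t.1 < t.2.2 ∧ 0 < t.1}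
def SC : Set (ℕ × ℕ × ℕ) := {t | t.1 < t.2.2 ∧ t.2.1 < t.1 ∧ 0 < t.2.1}
def SD : Set (ℕ × ℕ × ℕ) := {t | t.1 = t.2.1 ∧ t.2.1 = t.2.2}
def SE : Set (ℕ × ℕ × ℕ) := {t | t.2.2 < t.2.1 ∧ 0 < t.2.2}
def SF : Set (ℕ × ℕ × ℕ) := {t | t.1 < t.2.2 ∧ 0 < t.1}
def SG : Set (ℕ × ℕ × ℕ) := {t | t.2.1 < t.1 ∧ 0 < t.2.1}
def S2 : Set (ℕ × ℕ) := {p | p.2 < p.1 ∧ 0 < p.2}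

lemma h3A (a b c : ℕ) : zeta3 a b c = ∑' t, SA.indicator (F a b c) t :=
  tsum_subtype SA (F a b c)

lemma h3B (a b c : ℕ) : zeta3 b c a = ∑' t, SB.indicator (F a b c) t := by
  have e1 : zeta3 b c a = ∑' t, SA.indicator
      (fun t : ℕ × ℕ × ℕ => 1 / ((t.1 : ℝ) ^ b * (t.2.1 : ℝ) ^ c * (t.2.2 : ℝ) ^ a)) t :=
    tsum_subtype SA (fun t : ℕ × ℕ × ℕ => 1 / ((t.1 : ℝ) ^ b * (t.2.1 : ℝ) ^ c * (t.2.2 : ℝ) ^ a))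
  rw [e1, ← Equiv.tsum_eq σ (SA.indicator
      (fun t : ℕ × ℕ × ℕ => 1 / ((t.1 : ℝ) ^ b * (t.2.1 : ℝ) ^ c * (t.2.2 : ℝ) ^ a)))]
  refine tsum_congr fun t => ?_
  by_cases h : t ∈ SB
  · rw [Set.indicator_of_mem (show σ t ∈ SA from h), Set.indicator_of_mem h]
    simp only [F, σ, Equiv.coe_fn_mk]
    ring
  · rw [Set.indicator_of_notMem (show σ t ∉ SA from h), Set.indicator_of_notMem h]

lemma h3C (a b c : ℕ) : zeta3 c a b = ∑' t, SC.indicator (F a b c) t := by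
  have e1 : zeta3 c a b = ∑' t, SA.indicator
      (fun t : ℕ × ℕ × ℕ => 1 / ((t.1 : ℝ) ^ c * (t.2.1 : ℝ) ^ a * (t.2.2 : ℝ) ^ b)) t :=
    tsum_subtype SA (fun t : ℕ × ℕ × ℕ => 1 / ((t.1 : ℝ) ^ c * (t.2.1 : ℝ) ^ a * (t.2.2 : ℝ) ^ b))
  rw [e1, ← Equiv.tsum_eq τ (SA.indicator
      (fun t : ℕ × ℕ × ℕ => 1 / ((t.1 : ℝ) ^ c * (t.2.1 : ℝ) ^ a * (t.2.2 : ℝ) ^ b)))]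
  refine tsum_congr fun t => ?_
  by_cases h : t ∈ SC
  · rw [Set.indicator_of_mem (show τ t ∈ SA from h), Set.indicator_of_mem h]
    simp only [F, τ, σ, Equiv.coe_fn_mk, Equiv.symm]
    ring
  · rw [Set.indicator_of_notMem (show τ t ∉ SA from h), Set.indicator_of_notMem h]

lemma hD (a b c : ℕ) (ha : 2 ≤ a) (hb : 2 ≤ b) (hc : 2 ≤ c) :
    zeta1 (a + b + c) = ∑' t, SD.indicator (F a b c) t := by
  rw [zeta1_eq (by omega)]
  have e1 : (∑' n : ℕ, 1 / (n : ℝ) ^ (a + b + c))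
      = ∑' n : ℕ, SD.indicator (F a b c) (n, n, n) := by
    refine tsum_congr fun n => ?_
    rw [Set.indicator_of_mem (show ((n : ℕ), (n : ℕ), (n : ℕ)) ∈ SD from ⟨rfl, rfl⟩)]
    simp only [F]
    rw [pow_add, pow_add]
  rw [e1]
  refine Function.Injective.tsum_eq (g := fun n : ℕ => ((n, n, n) : ℕ × ℕ × ℕ))
    (fun x y h => by simpa using congrArg Prod.fst h) ?_
  intro t ht
  by_cases h : t ∈ SD
  · obtain ⟨m, n, p⟩ := t
    obtain ⟨h1, h2⟩ := h
    simp only at h1 h2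
    subst h1; subst h2
    exact ⟨m, rfl⟩
  · exact absurd (Set.indicator_of_notMem h _) ht

lemma zeta2_eq (u v : ℕ) : zeta2 u v
    = ∑' q : ℕ × ℕ, S2.indicator (fun q : ℕ × ℕ => 1 / ((q.1 : ℝ) ^ u * (q.2 : ℝ) ^ v)) q :=
  tsum_subtype S2 (fun q : ℕ × ℕ => 1 / ((q.1 : ℝ) ^ u * (q.2 : ℝ) ^ v))

lemma nsind {u v : ℕ} (hu : 2 ≤ u) (hv : 2 ≤ v) :
    Summable (fun q : ℕ × ℕ =>
      ‖S2.indicator (fun q : ℕ × ℕ => 1 / ((q.1 : ℝ) ^ u * (q.2 : ℝ) ^ v)) q‖) :=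
  ((sb2 hu hv).indicator S2).congr fun q =>
    (Real.norm_of_nonneg (Set.indicator_nonneg (fun x _ => by positivity) q)).symm

lemma hE (a b c : ℕ) (ha : 2 ≤ a) (hb : 2 ≤ b) (hc : 2 ≤ c) :
    zeta1 a * zeta2 b c = ∑' t, SE.indicator (F a b c) t := by
  rw [zeta1_eq ha, zeta2_eq, tsum_mul_tsum_of_summable_norm (nsb ha) (nsind hb hc)]
  refine tsum_congr fun t => ?_
  by_cases h : t.2 ∈ S2
  · rw [Set.indicator_of_mem h, Set.indicator_of_mem (show t ∈ SE from h)]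
    simp only [F]; ring
  · rw [Set.indicator_of_notMem h, Set.indicator_of_notMem (show t ∉ SE from h), mul_zero]

lemma hF (a b c : ℕ) (ha : 2 ≤ a) (hb : 2 ≤ b) (hc : 2 ≤ c) :
    zeta1 b * zeta2 c a = ∑' t, SF.indicator (F a b c) t := by
  rw [zeta1_eq hb, zeta2_eq, tsum_mul_tsum_of_summable_norm (nsb hb) (nsind hc ha),
    ← Equiv.tsum_eq σ (fun z : ℕ × ℕ × ℕ => 1 / (z.1 : ℝ) ^ b *
      S2.indicator (fun q : ℕ × ℕ => 1 / ((q.1 : ℝ) ^ c * (q.2 : ℝ) ^ a)) z.2)]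
  refine tsum_congr fun t => ?_
  simp only [σ, Equiv.coe_fn_mk]
  by_cases h : t ∈ SF
  · rw [Set.indicator_of_mem (show ((t.2.2, t.1) : ℕ × ℕ) ∈ S2 from h),
      Set.indicator_of_mem h]
    simp only [F]; ring
  · rw [Set.indicator_of_notMem (show ((t.2.2, t.1) : ℕ × ℕ) ∉ S2 from h),
      Set.indicator_of_notMem h, mul_zero]

lemma hG (a b c : ℕ) (ha : 2 ≤ a) (hb : 2 ≤ b) (hc : 2 ≤ c) :
    zeta1 c * zeta2 a b = ∑' t, SG.indicator (F a b c) t := by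
  rw [zeta1_eq hc, zeta2_eq, tsum_mul_tsum_of_summable_norm (nsb hc) (nsind ha hb),
    ← Equiv.tsum_eq τ (fun z : ℕ × ℕ × ℕ => 1 / (z.1 : ℝ) ^ c *
      S2.indicator (fun q : ℕ × ℕ => 1 / ((q.1 : ℝ) ^ a * (q.2 : ℝ) ^ b)) z.2)]
  refine tsum_congr fun t => ?_
  simp only [τ, σ, Equiv.symm, Equiv.coe_fn_mk]
  by_cases h : t ∈ SG
  · rw [Set.indicator_of_mem (show ((t.1, t.2.1) : ℕ × ℕ) ∈ S2 from h),
      Set.indicator_of_mem h]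
    simp only [F]; ring
  · rw [Set.indicator_of_notMem (show ((t.1, t.2.1) : ℕ × ℕ) ∉ S2 from h),
      Set.indicator_of_notMem h, mul_zero]

lemma hH (a b c : ℕ) (ha : 2 ≤ a) (hb : 2 ≤ b) (hc : 2 ≤ c) :
    zeta1 a * zeta1 b * zeta1 c = ∑' t, F a b c t := by
  rw [zeta1_eq ha, zeta1_eq hb, zeta1_eq hc, mul_assoc,
    tsum_mul_tsum_of_summable_norm (nsb hb) (nsb hc),
    tsum_mul_tsum_of_summable_norm (nsb ha)
      (((sb hb).mul_of_nonneg (sb hc) (fun n => by positivity) (fun n => by positivity)).congr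
        fun q => (Real.norm_of_nonneg (by positivity)).symm)]
  refine tsum_congr fun t => ?_
  simp only [F]; ring

lemma pointwise (a b c : ℕ) (ha : 2 ≤ a) (hb : 2 ≤ b) (hc : 2 ≤ c) (t : ℕ × ℕ × ℕ) :
    SA.indicator (F a b c) t + SB.indicator (F a b c) t + SC.indicator (F a b c) t
        + F a b c t
      = SD.indicator (F a b c) t + SE.indicator (F a b c) t + SF.indicator (F a b c) t
        + SG.indicator (F a b c) t := by
  classical
  obtain ⟨m, n, p⟩ := t
  by_cases hpos : 0 < m ∧ 0 < n ∧ 0 < p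
  · obtain ⟨h1, h2, h3⟩ := hpos
    simp only [Set.indicator_apply, SA, SB, SC, SD, SE, SF, SG, Set.mem_setOf_eq]
    split_ifs <;> first | ring1 | (exfalso; omega)
  · have hz : F a b c (m, n, p) = 0 := by
      have h0 : ((m : ℝ) ^ a * (n : ℝ) ^ b * (p : ℝ) ^ c) = 0 := by
        rcases (by omega : m = 0 ∨ n = 0 ∨ p = 0) with h | h | h <;> subst h <;>
          simp [zero_pow, show a ≠ 0 by omega, show b ≠ 0 by omega, show c ≠ 0 by omega]
      simp only [F]
      rw [h0, div_zero]
    simp only [Set.indicator_apply]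
    split_ifs <;> simp [hz]

end TPA


open TPA in
theorem three_point_identity (a b c : ℕ) (ha : 2 ≤ a) (hb : 2 ≤ b) (hc : 2 ≤ c) :
    zeta3 a b c =
      -zeta3 b c a - zeta3 c a b + zeta1 (a + b + c) + zeta1 a * zeta2 b c
        + zeta1 b * zeta2 c a + zeta1 c * zeta2 a b
        - zeta1 a * zeta1 b * zeta1 c := by
  have hsum := sF ha hb hc
  have hsub : ∀ s : Set (ℕ × ℕ × ℕ), Summable (s.indicator (F a b c)) :=
    fun s => hsum.indicator s
  have key : (∑' t, SA.indicator (F a b c) t) + (∑' t, SB.indicator (F a b c) t)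
      + (∑' t, SC.indicator (F a b c) t) + (∑' t, F a b c t)
      = (∑' t, SD.indicator (F a b c) t) + (∑' t, SE.indicator (F a b c) t)
      + (∑' t, SF.indicator (F a b c) t) + (∑' t, SG.indicator (F a b c) t) := by
    rw [← Summable.tsum_add (hsub SA) (hsub SB), ← Summable.tsum_add ((hsub SA).add (hsub SB)) (hsub SC),
      ← Summable.tsum_add (((hsub SA).add (hsub SB)).add (hsub SC)) hsum,
      ← Summable.tsum_add (hsub SD) (hsub SE), ← Summable.tsum_add ((hsub SD).add (hsub SE)) (hsub SF),
      ← Summable.tsum_add (((hsub SD).add (hsub SE)).add (hsub SF)) (hsub SG)]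
    exact tsum_congr (pointwise a b c ha hb hc)
  rw [h3A a b c, h3B a b c, h3C a b c, hD a b c ha hb hc, hE a b c ha hb hc,
    hF a b c ha hb hc, hG a b c ha hb hc, hH a b c ha hb hc]
  linarith [key]
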